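/- Let G = (V, E) be a graph with V = {1,…,n}, and let Σ_G = { ¬x_i ∨ ¬x_j : {i,j} ∈ E }. Then for α = n − k, the all-ones vector (1,…,1) is a model of σ_α(Σ_G) if and only if G has an independent set of size at least k. Consequently, σ_α(Σ_G) ⊨ ⋁_{i=1}^n ¬x_i if and only if G has no independent set of size at least k. -/

import Mathlib

/-- Hamming distance between two 0/1 vectors. -/
def Hdist {n : ℕ} (v w : Fin n → Bool) : ℕ :=
  (Finset.univ.filter (fun i => v i ≠ w i)).card

/-- α-sigmaInt of a model set. -/
def sigmaInt {n : ℕ} (α : ℕ) (M : Set (Fin n → Bool)) : Set (Fin n → Bool) :=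
  {v | ∀ w, Hdist v w ≤ α → w ∈ M}

/-- α-sigmaExt of a model set. -/
def sigmaExt {n : ℕ} (α : ℕ) (M : Set (Fin n → Bool)) : Set (Fin n → Bool) :=
  {v | ∃ w ∈ M, Hdist v w ≤ α}

/-- A clause with positive index set `P` and negative index set `N`. -/
structure Clause (n : ℕ) where
  P : Finset (Fin n)
  N : Finset (Fin n)
  disj : Disjoint P N

/-- Satisfaction of a clause by an assignment. -/
def Clause.sat {n : ℕ} (c : Clause n) (v : Fin n → Bool) : Prop :=
  (∃ i ∈ c.P, v i = true) ∨ (∃ i ∈ c.N, v i = false)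

lemma stmt17_aux {n k : ℕ} (hk : k ≤ n) (G : SimpleGraph (Fin n)) :
    (((fun _ => true) : Fin n → Bool) ∈
        sigmaExt (n - k) {v : Fin n → Bool |
          ∀ i j, G.Adj i j → ¬(v i = true ∧ v j = true)} ↔
      ∃ W : Finset (Fin n), (∀ i ∈ W, ∀ j ∈ W, ¬ G.Adj i j) ∧ k ≤ W.card) := by
  constructor
  · rintro ⟨w, hw, hd⟩
    refine ⟨Finset.univ.filter (fun i => w i = true), ?_, ?_⟩
    · intro i hi j hj hadj
      simp only [Finset.mem_filter] at hi hj
      exact hw i j hadj ⟨hi.2, hj.2⟩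
    · have h1 := Finset.card_filter_add_card_filter_not
        (s := (Finset.univ : Finset (Fin n))) (p := fun i => w i = true)
      have h2 : Hdist (fun _ => true) w =
          (Finset.univ.filter (fun i => ¬ w i = true)).card := by
        unfold Hdist
        congr 1
        apply Finset.filter_congr
        intro i _
        exact ne_comm
      rw [h2] at hd
      simp only [Finset.card_univ, Fintype.card_fin] at h1
      omega
  · rintro ⟨W, hind, hcard⟩
    refine ⟨fun i => decide (i ∈ W), ?_, ?_⟩
    · intro i j hadj ⟨hi, hj⟩
      simp only [decide_eq_true_eq] at hi hj
      exact hind i hi j hj hadj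
    · have h2 : Hdist (fun _ => true) (fun i => decide (i ∈ W)) =
          (Finset.univ.filter (fun i => i ∉ W)).card := by
        unfold Hdist
        congr 1
        apply Finset.filter_congr
        intro i _
        simp
      have h1 := Finset.card_filter_add_card_filter_not
        (s := (Finset.univ : Finset (Fin n))) (p := fun i => i ∈ W)
      simp only [Finset.card_univ, Fintype.card_fin, Finset.filter_mem_eq_inter,
        Finset.univ_inter] at h1
      rw [h2]
      omega

theorem stmt17 {n k : ℕ} (hk : k ≤ n) (G : SimpleGraph (Fin n)) :
    (((fun _ => true) : Fin n → Bool) ∈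
        sigmaExt (n - k) {v : Fin n → Bool |
          ∀ i j, G.Adj i j → ¬(v i = true ∧ v j = true)} ↔
      ∃ W : Finset (Fin n), (∀ i ∈ W, ∀ j ∈ W, ¬ G.Adj i j) ∧ k ≤ W.card) ∧
    ((∀ v ∈ sigmaExt (n - k) {v : Fin n → Bool |
          ∀ i j, G.Adj i j → ¬(v i = true ∧ v j = true)}, ∃ i, v i = false) ↔
      ¬ ∃ W : Finset (Fin n), (∀ i ∈ W, ∀ j ∈ W, ¬ G.Adj i j) ∧ k ≤ W.card) := by
  have haux := stmt17_aux hk G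
  refine ⟨haux, ?_⟩
  rw [← haux]
  constructor
  · intro h hmem
    obtain ⟨i, hi⟩ := h _ hmem
    simp at hi
  · intro h v hv
    by_contra hc
    push_neg at hc
    have : v = fun _ => true := by
      funext i
      have := hc i
      cases hvi : v i
      · exact absurd hvi this
      · rfl
    exact h (this ▸ hv)
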